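/- Let X ≥ 0 with E[X] = 1/λ, and S exponential with rate μ, independent of X. Then (1/μ) + E[X(1 − e^{−μX})]/E[1 − e^{−μX}] ≥ 1/μ + 1/λ, i.e., the peak age of the preemptive LCFS G/M/1 queue is minimized by deterministic X. -/

import Mathlib

open MeasureTheory ProbabilityTheory Real

section Aux

variable {Ω : Type*} [MeasureSpace Ω] [IsProbabilityMeasure (ℙ : Measure Ω)]

/-- Chebyshev association: for `g t = 1 - exp (-mu * t)` (monotone) and integrable `X`,
`E[X g(X)] ≥ E[X] E[g(X)]`. -/
lemma aux_assoc (X : Ω → ℝ) (mu : ℝ) (hmu : 0 < mu)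
    (hXmeas : Measurable X) (hXnn : ∀ᵐ ω ∂ℙ, 0 ≤ X ω) (hXint : Integrable X ℙ) :
    𝔼[X] * 𝔼[fun ω => 1 - exp (-mu * X ω)] ≤
      𝔼[fun ω => X ω * (1 - exp (-mu * X ω))] := by
  set g : ℝ → ℝ := fun t => 1 - exp (-mu * t) with hg
  have hgmono : Monotone g := by
    intro a b hab
    have : exp (-mu * b) ≤ exp (-mu * a) := by
      apply exp_le_exp.2
      nlinarith
    simp only [g]; linarith
  have hgmeas : Measurable g :=
    measurable_const.sub ((measurable_id.const_mul (-mu)).exp)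
  -- integrability of g ∘ X (bounded by 1 a.e.)
  have hbound : ∀ᵐ ω ∂ℙ, ‖g (X ω)‖ ≤ 1 := by
    filter_upwards [hXnn] with ω hω
    have h1 : exp (-mu * X ω) ≤ 1 := exp_le_one_iff.2 (by nlinarith)
    have h2 : 0 < exp (-mu * X ω) := exp_pos _
    rw [Real.norm_eq_abs, abs_le]
    constructor <;> simp only [g] <;> linarith
  have hgint : Integrable (fun ω => g (X ω)) ℙ := by
    apply Integrable.mono (integrable_const (1:ℝ)) (hgmeas.comp hXmeas).aestronglyMeasurable
    simpa using hbound
  have hXgint : Integrable (fun ω => X ω * g (X ω)) ℙ := by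
    apply Integrable.mono hXint ((hXmeas.mul (hgmeas.comp hXmeas)).aestronglyMeasurable)
    filter_upwards [hbound] with ω hω
    rw [Pi.mul_apply, Function.comp_apply, norm_mul]
    calc ‖X ω‖ * ‖g (X ω)‖ ≤ ‖X ω‖ * 1 :=
          mul_le_mul_of_nonneg_left hω (norm_nonneg _)
      _ = ‖X ω‖ := mul_one _
  -- product measure argument
  have key : 0 ≤ ∫ z : Ω × Ω, (X z.1 - X z.2) * (g (X z.1) - g (X z.2))
      ∂((ℙ : Measure Ω).prod ℙ) := by
    apply integral_nonneg
    intro z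
    rcases le_total (X z.2) (X z.1) with h | h
    · exact mul_nonneg (by linarith) (by have := hgmono h; linarith)
    · have h1 : X z.1 - X z.2 ≤ 0 := by linarith
      have h2 : g (X z.1) - g (X z.2) ≤ 0 := by have := hgmono h; linarith
      exact mul_nonneg_of_nonpos_of_nonpos h1 h2
  have c1 : Integrable (fun _ : Ω => (1 : ℝ)) ℙ := integrable_const 1
  have i1 : Integrable (fun z : Ω × Ω => X z.1 * g (X z.1)) ((ℙ : Measure Ω).prod ℙ) := by
    have := hXgint.mul_prod c1
    simpa using this
  have i2 : Integrable (fun z : Ω × Ω => X z.2 * g (X z.2)) ((ℙ : Measure Ω).prod ℙ) := by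
    have := c1.mul_prod hXgint
    simpa using this
  have i3 : Integrable (fun z : Ω × Ω => X z.1 * g (X z.2)) ((ℙ : Measure Ω).prod ℙ) :=
    hXint.mul_prod hgint
  have i4 : Integrable (fun z : Ω × Ω => X z.2 * g (X z.1)) ((ℙ : Measure Ω).prod ℙ) := by
    have := hgint.mul_prod hXint
    simpa [mul_comm] using this
  have expand : ∫ z : Ω × Ω, (X z.1 - X z.2) * (g (X z.1) - g (X z.2))
      ∂((ℙ : Measure Ω).prod ℙ)
      = (∫ z : Ω × Ω, X z.1 * g (X z.1) ∂((ℙ : Measure Ω).prod ℙ))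
        + (∫ z : Ω × Ω, X z.2 * g (X z.2) ∂((ℙ : Measure Ω).prod ℙ))
        - (∫ z : Ω × Ω, X z.1 * g (X z.2) ∂((ℙ : Measure Ω).prod ℙ))
        - (∫ z : Ω × Ω, X z.2 * g (X z.1) ∂((ℙ : Measure Ω).prod ℙ)) := by
    rw [show (fun z : Ω × Ω => (X z.1 - X z.2) * (g (X z.1) - g (X z.2)))
        = fun z : Ω × Ω => (X z.1 * g (X z.1) + X z.2 * g (X z.2))
          - (X z.1 * g (X z.2) + X z.2 * g (X z.1)) from funext fun z => by ring
    ]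
    have h := integral_sub (i1.add i2) (i3.add i4)
    simp only [Pi.add_apply] at h
    rw [h, integral_add i1 i2, integral_add i3 i4]
    ring
  have e1 : ∫ z : Ω × Ω, X z.1 * g (X z.1) ∂((ℙ : Measure Ω).prod ℙ)
      = 𝔼[fun ω => X ω * g (X ω)] := by
    have := integral_prod_mul (μ := (ℙ : Measure Ω)) (ν := (ℙ : Measure Ω))
      (fun ω => X ω * g (X ω)) (fun _ => (1 : ℝ))
    simpa using this
  have e2 : ∫ z : Ω × Ω, X z.2 * g (X z.2) ∂((ℙ : Measure Ω).prod ℙ)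
      = 𝔼[fun ω => X ω * g (X ω)] := by
    have := integral_prod_mul (μ := (ℙ : Measure Ω)) (ν := (ℙ : Measure Ω))
      (fun _ => (1 : ℝ)) (fun ω => X ω * g (X ω))
    simpa using this
  have e3 : ∫ z : Ω × Ω, X z.1 * g (X z.2) ∂((ℙ : Measure Ω).prod ℙ)
      = 𝔼[X] * 𝔼[fun ω => g (X ω)] :=
    integral_prod_mul (μ := (ℙ : Measure Ω)) (ν := (ℙ : Measure Ω)) X (fun ω => g (X ω))
  have e4 : ∫ z : Ω × Ω, X z.2 * g (X z.1) ∂((ℙ : Measure Ω).prod ℙ)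
      = 𝔼[X] * 𝔼[fun ω => g (X ω)] := by
    have := integral_prod_mul (μ := (ℙ : Measure Ω)) (ν := (ℙ : Measure Ω))
      (fun ω => g (X ω)) X
    simp only [mul_comm] at this ⊢
    simpa [mul_comm] using this
  rw [expand, e1, e2, e3, e4] at key
  linarith

end Aux

/-- The peak age of the preemptive LCFS G/M/1 queue,
`1/μ + E[X(1 − e^{−μX})]/E[1 − e^{−μX}]`, is at least `1/μ + 1/λ`, the value
attained by deterministic inter-generation times. -/
theorem LCFS_GM1_peak_age_deterministic_minimizes
    {Ω : Type*} [MeasureSpace Ω] [IsProbabilityMeasure (ℙ : Measure Ω)]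
    (X S : Ω → ℝ) (lam mu : ℝ) (hlam : 0 < lam) (hmu : 0 < mu)
    (hXmeas : Measurable X) (hSmeas : Measurable S)
    (hXnn : ∀ᵐ ω ∂ℙ, 0 ≤ X ω)
    (hXint : Integrable X ℙ) (hEX : 𝔼[X] = 1 / lam)
    (hS : Measure.map S ℙ = expMeasure mu)
    (hindep : IndepFun X S ℙ) :
    1 / mu + 1 / lam ≤
      1 / mu + 𝔼[fun ω => X ω * (1 - exp (-mu * X ω))] /
        𝔼[fun ω => 1 - exp (-mu * X ω)] := by
  have assoc := aux_assoc X mu hmu hXmeas hXnn hXint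
  set g : Ω → ℝ := fun ω => 1 - exp (-mu * X ω) with hg
  have hgmeas : Measurable g :=
    measurable_const.sub ((hXmeas.const_mul (-mu)).exp)
  have hgnn : ∀ᵐ ω ∂ℙ, 0 ≤ g ω := by
    filter_upwards [hXnn] with ω hω
    have : exp (-mu * X ω) ≤ 1 := exp_le_one_iff.2 (by nlinarith)
    simp only [g]; linarith
  have hgint : Integrable g ℙ := by
    apply Integrable.mono (integrable_const (1:ℝ)) hgmeas.aestronglyMeasurable
    filter_upwards [hXnn] with ω hω
    have h1 : exp (-mu * X ω) ≤ 1 := exp_le_one_iff.2 (by nlinarith)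
    have h2 : 0 < exp (-mu * X ω) := exp_pos _
    rw [Real.norm_eq_abs, abs_le, norm_one]
    constructor <;> simp only [g] <;> linarith
  -- denominator positive
  have hEg : 0 < 𝔼[g] := by
    rcases lt_or_eq_of_le (integral_nonneg_of_ae hgnn) with h | h
    · exact h
    · exfalso
      have hzero : g =ᵐ[ℙ] 0 :=
        (integral_eq_zero_iff_of_nonneg_ae hgnn hgint).1 h.symm
      have hX0 : X =ᵐ[ℙ] 0 := by
        filter_upwards [hzero, hXnn] with ω h0 hω
        have he : exp (-mu * X ω) = 1 := by
          simp only [g, Pi.zero_apply] at h0; linarith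
        by_contra hne
        have hx : 0 < X ω := lt_of_le_of_ne hω (Ne.symm hne)
        have : exp (-mu * X ω) < 1 := exp_lt_one_iff.2 (by nlinarith)
        simp at hne
        linarith
      have : 𝔼[X] = 0 := by
        rw [integral_congr_ae hX0]; simp
      rw [hEX] at this
      have : (0:ℝ) < 1 / lam := by positivity
      linarith
  have hfrac : 1 / lam ≤ 𝔼[fun ω => X ω * (1 - exp (-mu * X ω))] / 𝔼[g] := by
    rw [le_div_iff₀ hEg]
    calc 1 / lam * 𝔼[g] = 𝔼[X] * 𝔼[g] := by rw [hEX]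
      _ ≤ _ := assoc
  linarith
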